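/- Let A = !![a, b; c, d] be a real 2×2 matrix, and suppose r : ℝ → ℝ and θ : ℝ → ℝ are differentiable functions with r(t) > 0 for all t, such that the curve X(t) = r(t)·(cos θ(t), sin θ(t)) ∈ ℝ² satisfies X'(t) = A · X(t) for all t. Then for every t, r'(t) = r(t)·R_A(θ(t)) and θ'(t) = T_A(θ(t)). -/

import Mathlib

open Real Matrix

/-- The radial component `R_A(θ) = ⟨A·v(θ), v(θ)⟩` with `v(θ) = (cos θ, sin θ)`. -/
noncomputable def Rcomp (A : Matrix (Fin 2) (Fin 2) ℝ) (θ : ℝ) : ℝ :=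
  A.mulVec ![Real.cos θ, Real.sin θ] ⬝ᵥ ![Real.cos θ, Real.sin θ]

/-- The tangential component `T_A(θ) = ⟨A·v(θ), v⊥(θ)⟩` with `v⊥(θ) = (−sin θ, cos θ)`. -/
noncomputable def Tcomp (A : Matrix (Fin 2) (Fin 2) ℝ) (θ : ℝ) : ℝ :=
  A.mulVec ![Real.cos θ, Real.sin θ] ⬝ᵥ ![-Real.sin θ, Real.cos θ]

theorem stmt_2 (a b c d : ℝ) (A : Matrix (Fin 2) (Fin 2) ℝ) (hA : A = !![a, b; c, d])
    (r θ : ℝ → ℝ) (hr : Differentiable ℝ r) (hθ : Differentiable ℝ θ)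
    (hrpos : ∀ t, 0 < r t)
    (hODE : ∀ (t : ℝ) (i : Fin 2),
      HasDerivAt (fun s => r s * ![Real.cos (θ s), Real.sin (θ s)] i)
        (A.mulVec (fun j => r t * ![Real.cos (θ t), Real.sin (θ t)] j) i) t) :
    ∀ t : ℝ, HasDerivAt r (r t * Rcomp A (θ t)) t ∧ HasDerivAt θ (Tcomp A (θ t)) t := by
  intro t
  set r' := deriv r t with hr'
  set θ' := deriv θ t with hθ'
  have hrt : HasDerivAt r r' t := (hr t).hasDerivAt
  have hθt : HasDerivAt θ θ' t := (hθ t).hasDerivAt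
  have hcos : HasDerivAt (fun s => Real.cos (θ s)) (-Real.sin (θ t) * θ') t :=
    (Real.hasDerivAt_cos (θ t)).comp t hθt
  have hsin : HasDerivAt (fun s => Real.sin (θ s)) (Real.cos (θ t) * θ') t :=
    (Real.hasDerivAt_sin (θ t)).comp t hθt
  have hx : HasDerivAt (fun s => r s * Real.cos (θ s))
      (r' * Real.cos (θ t) + r t * (-Real.sin (θ t) * θ')) t := hrt.mul hcos
  have hy : HasDerivAt (fun s => r s * Real.sin (θ s))
      (r' * Real.sin (θ t) + r t * (Real.cos (θ t) * θ')) t := hrt.mul hsin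
  have h0 := hODE t 0
  have h1 := hODE t 1
  simp only [hA, Matrix.mulVec, dotProduct, Fin.sum_univ_two,
    Matrix.cons_val_zero, Matrix.cons_val_one, Matrix.head_cons,
    Matrix.of_apply, Matrix.cons_val', Matrix.empty_val',
    Matrix.cons_val_fin_one, Matrix.head_fin_const] at h0 h1
  have E0 := hx.unique h0
  have E1 := hy.unique h1
  set cθ := Real.cos (θ t)
  set sθ := Real.sin (θ t)
  have pyth : sθ ^ 2 + cθ ^ 2 = 1 := Real.sin_sq_add_cos_sq (θ t)
  have hR : Rcomp A (θ t) = (a * cθ + b * sθ) * cθ + (c * cθ + d * sθ) * sθ := by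
    simp [Rcomp, hA, Matrix.mulVec, dotProduct, Fin.sum_univ_two]
    rfl
  have hT : Tcomp A (θ t) = (a * cθ + b * sθ) * (-sθ) + (c * cθ + d * sθ) * cθ := by
    simp [Tcomp, hA, Matrix.mulVec, dotProduct, Fin.sum_univ_two]
    rfl
  have hr0 : (r t) ≠ 0 := (hrpos t).ne'
  constructor
  · have : r' = r t * Rcomp A (θ t) := by
      rw [hR]
      linear_combination cθ * E0 + sθ * E1 - r' * pyth
    exact this ▸ hrt
  · have : θ' = Tcomp A (θ t) := by
      rw [hT]
      have h : r t * θ' = r t * ((a * cθ + b * sθ) * (-sθ) + (c * cθ + d * sθ) * cθ) := by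
        linear_combination (-sθ) * E0 + cθ * E1 - (r t * θ') * pyth
      exact mul_left_cancel₀ hr0 h
    exact this ▸ hθt
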